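/- Proposition (parabolic form of the subgroups Γ_I; equations (6.2) and (8B7)). With the notation and assumptions of the context, let I ⊆ {0,…,d+k−1}, put I₁ := I ∩ {0,…,d−1} and I₂' := {i − d : i ∈ I, i ≥ d} ⊆ {0,…,k−1}. Then: (a) if d−1 ∉ I₁, then Γ_I = ⟨σ_i : i ∈ I₁⟩ × G_{I₂'}, an internal direct product in Γ of the standard parabolic subgroup of W on the nodes I₁ with the subgroup G_{I₂'} of G; (b) if d−1 ∈ I₁, then Γ_I = ⟨σ_i, σ_H : i ∈ I₁∖{d−1}, H ∈ x₀·G_{I₂'}⟩ ⋊ G_{I₂'}, an internal semidirect product in Γ of the standard parabolic subgroup of W on the nodes (I₁∖{d−1}) ∪ (x₀·G_{I₂'}) with G_{I₂'}. In particular, for every j with d ≤ j ≤ d+k−1, ⟨R̂_0, …, R̂_j⟩ = ⟨σ_i, σ_H : 0 ≤ i ≤ d−2, H ∈ x₀·G_{{0,…,j−d}}⟩ ⋊ G_{{0,…,j−d}}. -/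

import Mathlib

noncomputable section

/-- The Coxeter matrix `𝒟` on the node set `B = {0,…,d−2} ⊔ V`: the string diagram of the
universal regular `d`-polytope `{q_1, …, q_{d−1}}` on the nodes `0, …, d−2`, extended by the
trivial diagram on `V`, with each node `H ∈ V` joined to the node `d−2` by a branch labelled
`q_{d−1}` (the label `0` stands for `∞`). -/
def coxMat (d v : ℕ) (q : ℕ → ℕ) (hq : ∀ m, q m = 0 ∨ 2 ≤ q m) :
    CoxeterMatrix (Fin (d - 1) ⊕ Fin v) where
  M := Matrix.of fun b b' =>
    match b, b' with
    | Sum.inl i, Sum.inl j =>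
        if i = j then 1
        else if (i : ℕ) + 1 = (j : ℕ) ∨ (j : ℕ) + 1 = (i : ℕ) then
          q (min (i : ℕ) (j : ℕ) + 1) else 2
    | Sum.inl i, Sum.inr _ => if (i : ℕ) = d - 2 then q (d - 1) else 2
    | Sum.inr _, Sum.inl i => if (i : ℕ) = d - 2 then q (d - 1) else 2
    | Sum.inr H, Sum.inr H' => if H = H' then 1 else 2
  isSymm := by
    ext b b'
    rcases b with i | H <;> rcases b' with j | H'
    · by_cases h : i = j
      · subst h; simp
      · simp only [Matrix.transpose_apply, Matrix.of_apply, if_neg h, if_neg (Ne.symm h)]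
        simp only [min_comm, or_comm]
    · rfl
    · rfl
    · by_cases h : H = H'
      · subst h; simp
      · simp only [Matrix.transpose_apply, Matrix.of_apply, if_neg h, if_neg (Ne.symm h)]
  diagonal := by
    intro b
    rcases b with i | H <;> simp
  off_diagonal := by
    intro b b' hbb'
    rcases b with i | H <;> rcases b' with j | H'
    · have h : i ≠ j := fun h => hbb' (by rw [h])
      simp only [Matrix.of_apply, if_neg h]
      by_cases h2 : (i : ℕ) + 1 = (j : ℕ) ∨ (j : ℕ) + 1 = (i : ℕ)
      · rw [if_pos h2]
        rcases hq (min (i : ℕ) (j : ℕ) + 1) with h3 | h3 <;> omega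
      · rw [if_neg h2]; omega
    · simp only [Matrix.of_apply]
      by_cases h2 : (i : ℕ) = d - 2
      · rw [if_pos h2]
        rcases hq (d - 1) with h3 | h3 <;> omega
      · rw [if_neg h2]; omega
    · simp only [Matrix.of_apply]
      by_cases h2 : (j : ℕ) = d - 2
      · rw [if_pos h2]
        rcases hq (d - 1) with h3 | h3 <;> omega
      · rw [if_neg h2]; omega
    · have h : H ≠ H' := fun h => hbb' (by rw [h])
      simp only [Matrix.of_apply, if_neg h]
      omega

open Pointwise

/-- `G_I = ⟨R_i : i ∈ I⟩`. -/
def GIg (k : ℕ) {G : Type*} [Group G] (R : Fin k → Subgroup G) (I : Set (Fin k)) : Subgroup G :=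
  ⨆ i ∈ I, R i

/-- The orbit `x₀ · G_I` of the base vertex `x₀` under `π(G_I)`. -/
def orbG (k v : ℕ) {G : Type*} [Group G] (π : G →* Equiv.Perm (Fin v))
    (R : Fin k → Subgroup G) (x₀ : Fin v) (I : Set (Fin k)) : Set (Fin v) :=
  {x | ∃ g ∈ GIg k R I, π g x₀ = x}

/-- The distinguished generating subgroups `R̂_0, …, R̂_{d+k−1}` of `Γ = W ⋊[α] G`:
`R̂_i = ⟨σ_i⟩` for `0 ≤ i ≤ d−2`, `R̂_{d−1} = ⟨σ_{x₀}⟩`, and `R̂_{d+i} = R_i` for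
`0 ≤ i ≤ k−1`. -/
def Rhat (d k v : ℕ) (q : ℕ → ℕ) (hq : ∀ m, q m = 0 ∨ 2 ≤ q m) (hd : 2 ≤ d)
    {G : Type*} [Group G] (α : G →* MulAut (coxMat d v q hq).Group)
    (R : Fin k → Subgroup G) (x₀ : Fin v) (i : Fin (d + k)) :
    Subgroup ((coxMat d v q hq).Group ⋊[α] G) :=
  if h : (i : ℕ) < d - 1 then
    Subgroup.closure {SemidirectProduct.inl ((coxMat d v q hq).simple (Sum.inl ⟨(i : ℕ), h⟩))}
  else if h2 : (i : ℕ) = d - 1 then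
    Subgroup.closure {SemidirectProduct.inl ((coxMat d v q hq).simple (Sum.inr x₀))}
  else
    Subgroup.map SemidirectProduct.inr (R ⟨(i : ℕ) - d, by have h3 := i.isLt; omega⟩)

/-- `Γ_I = ⟨R̂_i : i ∈ I⟩`. -/
def GammaIx (d k v : ℕ) (q : ℕ → ℕ) (hq : ∀ m, q m = 0 ∨ 2 ≤ q m) (hd : 2 ≤ d)
    {G : Type*} [Group G] (α : G →* MulAut (coxMat d v q hq).Group)
    (R : Fin k → Subgroup G) (x₀ : Fin v) (I : Set (Fin (d + k))) :
    Subgroup ((coxMat d v q hq).Group ⋊[α] G) :=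
  ⨆ i ∈ I, Rhat d k v q hq hd α R x₀ i

/-- The standard parabolic subgroup of the Coxeter group `W` on a set `S` of nodes. -/
def parab (d v : ℕ) (q : ℕ → ℕ) (hq : ∀ m, q m = 0 ∨ 2 ≤ q m)
    (S : Set (Fin (d - 1) ⊕ Fin v)) : Subgroup (coxMat d v q hq).Group :=
  Subgroup.closure ((coxMat d v q hq).simple '' S)

section Aux

variable {d k v : ℕ} (hd : 2 ≤ d) {q : ℕ → ℕ} {hq : ∀ m, q m = 0 ∨ 2 ≤ q m}
  {G : Type*} [Group G] {R : Fin k → Subgroup G} {π : G →* Equiv.Perm (Fin v)} {x₀ : Fin v}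
  {α : G →* MulAut (coxMat d v q hq).Group}

lemma aux_map_inl_inf_map_inr {W G : Type*} [Group W] [Group G] (φ : G →* MulAut W)
    (A : Subgroup W) (B : Subgroup G) :
    Subgroup.map (SemidirectProduct.inl (φ := φ)) A ⊓
      Subgroup.map (SemidirectProduct.inr (φ := φ)) B = ⊥ := by
  rw [eq_bot_iff]
  rintro x ⟨hx1, hx2⟩
  obtain ⟨a, -, rfl⟩ := Subgroup.mem_map.mp hx1
  obtain ⟨b, -, hb⟩ := Subgroup.mem_map.mp hx2
  have hb1 : b = 1 := by
    have := congrArg SemidirectProduct.right hb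
    simpa using this
  rw [hb1, map_one] at hb
  rw [Subgroup.mem_bot]
  exact hb.symm

lemma aux_R_le_GIg {I : Set (Fin k)} {t : Fin k} (ht : t ∈ I) : R t ≤ GIg k R I := by
  simp only [GIg]
  exact le_iSup₂ (f := fun t _ => R t) t ht

lemma aux_Rhat_le_GammaIx {I : Set (Fin (d + k))} {i : Fin (d + k)} (hi : i ∈ I) :
    Rhat d k v q hq hd α R x₀ i ≤ GammaIx d k v q hq hd α R x₀ I := by
  simp only [GammaIx]
  exact le_iSup₂ (f := fun i _ => Rhat d k v q hq hd α R x₀ i) i hi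

lemma aux_mapGIg_le {I : Set (Fin (d + k))} :
    Subgroup.map (SemidirectProduct.inr (φ := α))
      (GIg k R {t : Fin k | ∃ i ∈ I, (i : ℕ) = (t : ℕ) + d})
      ≤ GammaIx d k v q hq hd α R x₀ I := by
  simp only [GIg, Subgroup.map_iSup]
  refine iSup_le fun t => iSup_le fun ht => ?_
  obtain ⟨i, hi, hival⟩ := ht
  refine le_trans ?_ (aux_Rhat_le_GammaIx hd hi)
  have hd1 : ¬ ((i : ℕ) < d - 1) := by omega
  have hd2 : ¬ ((i : ℕ) = d - 1) := by omega
  simp only [Rhat, dif_neg hd1, dif_neg hd2]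
  have ht' : (⟨(i : ℕ) - d, by have := i.isLt; omega⟩ : Fin k) = t := Fin.ext (by simp; omega)
  rw [ht']

lemma aux_x₀_mem_orb {J : Set (Fin k)} : x₀ ∈ orbG k v π R x₀ J :=
  ⟨1, one_mem _, by simp⟩

/-- `α g` preserves the parabolic subgroup on `inl '' T ∪ inr '' (x₀·G_J)` for `g ∈ G_J`. -/
lemma aux_stab
    (hα1 : ∀ (g : G) (i : Fin (d - 1)),
      α g ((coxMat d v q hq).simple (Sum.inl i)) = (coxMat d v q hq).simple (Sum.inl i))
    (hα2 : ∀ (g : G) (H : Fin v),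
      α g ((coxMat d v q hq).simple (Sum.inr H)) = (coxMat d v q hq).simple (Sum.inr (π g H)))
    {T : Set (Fin (d - 1))} {J : Set (Fin k)} {g : G} (hg : g ∈ GIg k R J)
    {w : (coxMat d v q hq).Group}
    (hw : w ∈ parab d v q hq (Sum.inl '' T ∪ Sum.inr '' orbG k v π R x₀ J)) :
    α g w ∈ parab d v q hq (Sum.inl '' T ∪ Sum.inr '' orbG k v π R x₀ J) := by
  simp only [parab] at hw ⊢
  induction hw using Subgroup.closure_induction with
  | mem x hx =>
      obtain ⟨b, hb, rfl⟩ := hx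
      rcases hb with ⟨j, hj, rfl⟩ | ⟨H, hH, rfl⟩
      · rw [hα1]
        exact Subgroup.subset_closure ⟨Sum.inl j, Or.inl ⟨j, hj, rfl⟩, rfl⟩
      · rw [hα2]
        obtain ⟨g', hg', rfl⟩ := hH
        refine Subgroup.subset_closure ⟨Sum.inr (π g (π g' x₀)),
          Or.inr ⟨π g (π g' x₀), ⟨g * g', mul_mem hg hg', by simp [map_mul]⟩, rfl⟩, rfl⟩
  | one => rw [map_one]; exact one_mem _
  | mul x y hx hy ihx ihy => rw [map_mul]; exact mul_mem ihx ihy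
  | inv x hx ihx => rw [map_inv]; exact inv_mem ihx

/-- `α g` fixes the parabolic subgroup on a set of `inl`-nodes pointwise. -/
lemma aux_fix
    (hα1 : ∀ (g : G) (i : Fin (d - 1)),
      α g ((coxMat d v q hq).simple (Sum.inl i)) = (coxMat d v q hq).simple (Sum.inl i))
    {T : Set (Fin (d - 1))} (g : G) {w : (coxMat d v q hq).Group}
    (hw : w ∈ parab d v q hq (Sum.inl '' T)) : α g w = w := by
  simp only [parab] at hw
  induction hw using Subgroup.closure_induction with
  | mem x hx =>
      obtain ⟨b, ⟨j, hj, rfl⟩, rfl⟩ := hx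
      exact hα1 g j
  | one => exact map_one _
  | mul x y hx hy ihx ihy => rw [map_mul, ihx, ihy]
  | inv x hx ihx => rw [map_inv, ihx]

/-- Part (a) equation. -/
lemma aux_partA (I : Set (Fin (d + k))) (hnot : ¬∃ i ∈ I, (i : ℕ) = d - 1) :
    GammaIx d k v q hq hd α R x₀ I
      = Subgroup.map (SemidirectProduct.inl (φ := α))
          (parab d v q hq (Sum.inl '' {j : Fin (d - 1) | ∃ i ∈ I, (i : ℕ) = (j : ℕ)})) ⊔
        Subgroup.map (SemidirectProduct.inr (φ := α))
          (GIg k R {t : Fin k | ∃ i ∈ I, (i : ℕ) = (t : ℕ) + d}) := by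
  refine le_antisymm ?_ (sup_le ?_ (aux_mapGIg_le hd))
  · simp only [GammaIx]
    refine iSup₂_le fun i hi => ?_
    rcases lt_trichotomy ((i : ℕ)) (d - 1) with h1 | h1 | h1
    · simp only [Rhat, dif_pos h1]
      refine (Subgroup.closure_le _).mpr ?_
      rintro y rfl
      exact Subgroup.mem_sup_left (Subgroup.mem_map.mpr
        ⟨_, Subgroup.subset_closure ⟨Sum.inl ⟨(i : ℕ), h1⟩, ⟨⟨(i : ℕ), h1⟩, ⟨i, hi, rfl⟩, rfl⟩,
          rfl⟩, rfl⟩)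
    · exact absurd ⟨i, hi, h1⟩ hnot
    · simp only [Rhat, dif_neg (by omega : ¬ (i : ℕ) < d - 1),
        dif_neg (by omega : ¬ (i : ℕ) = d - 1)]
      refine le_trans (Subgroup.map_mono ?_) le_sup_right
      refine aux_R_le_GIg ⟨i, hi, ?_⟩
      show (i : ℕ) = (i : ℕ) - d + d
      omega
  · simp only [parab, MonoidHom.map_closure]
    refine (Subgroup.closure_le _).mpr ?_
    rintro y ⟨z, ⟨b, ⟨j, ⟨i, hi, hij⟩, rfl⟩, rfl⟩, rfl⟩
    refine aux_Rhat_le_GammaIx hd hi ?_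
    have hlt : (i : ℕ) < d - 1 := by have := j.isLt; omega
    simp only [Rhat, dif_pos hlt]
    have hj' : (⟨(i : ℕ), hlt⟩ : Fin (d - 1)) = j := Fin.ext hij
    rw [hj']
    exact Subgroup.subset_closure rfl

/-- Part (b) equation. -/
lemma aux_partB
    (hα2 : ∀ (g : G) (H : Fin v),
      α g ((coxMat d v q hq).simple (Sum.inr H)) = (coxMat d v q hq).simple (Sum.inr (π g H)))
    (I : Set (Fin (d + k))) (hyes : ∃ i ∈ I, (i : ℕ) = d - 1) :
    GammaIx d k v q hq hd α R x₀ I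
      = Subgroup.map (SemidirectProduct.inl (φ := α))
          (parab d v q hq (Sum.inl '' {j : Fin (d - 1) | ∃ i ∈ I, (i : ℕ) = (j : ℕ)} ∪
            Sum.inr '' orbG k v π R x₀ {t : Fin k | ∃ i ∈ I, (i : ℕ) = (t : ℕ) + d})) ⊔
        Subgroup.map (SemidirectProduct.inr (φ := α))
          (GIg k R {t : Fin k | ∃ i ∈ I, (i : ℕ) = (t : ℕ) + d}) := by
  have hσx₀ : (SemidirectProduct.inl ((coxMat d v q hq).simple (Sum.inr x₀)) :
      (coxMat d v q hq).Group ⋊[α] G) ∈ GammaIx d k v q hq hd α R x₀ I := by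
    obtain ⟨i₀, hi₀, hval⟩ := hyes
    refine aux_Rhat_le_GammaIx hd hi₀ ?_
    simp only [Rhat, dif_neg (by omega : ¬ (i₀ : ℕ) < d - 1), dif_pos hval]
    exact Subgroup.subset_closure rfl
  refine le_antisymm ?_ (sup_le ?_ (aux_mapGIg_le hd))
  · simp only [GammaIx]
    refine iSup₂_le fun i hi => ?_
    rcases lt_trichotomy ((i : ℕ)) (d - 1) with h1 | h1 | h1
    · simp only [Rhat, dif_pos h1]
      refine (Subgroup.closure_le _).mpr ?_
      rintro y rfl
      exact Subgroup.mem_sup_left (Subgroup.mem_map.mpr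
        ⟨_, Subgroup.subset_closure ⟨Sum.inl ⟨(i : ℕ), h1⟩,
          Or.inl ⟨⟨(i : ℕ), h1⟩, ⟨i, hi, rfl⟩, rfl⟩, rfl⟩, rfl⟩)
    · simp only [Rhat, dif_neg (by omega : ¬ (i : ℕ) < d - 1), dif_pos h1]
      refine (Subgroup.closure_le _).mpr ?_
      rintro y rfl
      exact Subgroup.mem_sup_left (Subgroup.mem_map.mpr
        ⟨_, Subgroup.subset_closure ⟨Sum.inr x₀, Or.inr ⟨x₀, aux_x₀_mem_orb, rfl⟩, rfl⟩, rfl⟩)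
    · simp only [Rhat, dif_neg (by omega : ¬ (i : ℕ) < d - 1),
        dif_neg (by omega : ¬ (i : ℕ) = d - 1)]
      refine le_trans (Subgroup.map_mono ?_) le_sup_right
      refine aux_R_le_GIg ⟨i, hi, ?_⟩
      show (i : ℕ) = (i : ℕ) - d + d
      omega
  · simp only [parab, MonoidHom.map_closure]
    refine (Subgroup.closure_le _).mpr ?_
    rintro y ⟨z, ⟨b, hb, rfl⟩, rfl⟩
    rcases hb with ⟨j, ⟨i, hi, hij⟩, rfl⟩ | ⟨H, hH, rfl⟩
    · refine aux_Rhat_le_GammaIx hd hi ?_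
      have hlt : (i : ℕ) < d - 1 := by have := j.isLt; omega
      simp only [Rhat, dif_pos hlt]
      have hj' : (⟨(i : ℕ), hlt⟩ : Fin (d - 1)) = j := Fin.ext hij
      rw [hj']
      exact Subgroup.subset_closure rfl
    · obtain ⟨g, hg, rfl⟩ := hH
      have key : (SemidirectProduct.inl ((coxMat d v q hq).simple (Sum.inr (π g x₀))) :
          (coxMat d v q hq).Group ⋊[α] G)
          = SemidirectProduct.inr g *
              SemidirectProduct.inl ((coxMat d v q hq).simple (Sum.inr x₀)) *
              SemidirectProduct.inr g⁻¹ := by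
        rw [← hα2 g x₀]
        exact SemidirectProduct.inl_aut g _
      rw [key]
      have hgΓ : (SemidirectProduct.inr g : (coxMat d v q hq).Group ⋊[α] G)
          ∈ GammaIx d k v q hq hd α R x₀ I :=
        aux_mapGIg_le hd (Subgroup.mem_map.mpr ⟨g, hg, rfl⟩)
      refine mul_mem (mul_mem hgΓ hσx₀) ?_
      rw [map_inv]
      exact inv_mem hgΓ

end Aux

/-- Proposition (equations (6.2) and (8B7)): parabolic form of the subgroups `Γ_I` of
`Γ = W ⋊[α] G`.  With `I₁ = I ∩ {0,…,d−1}` and `I₂′ = {i − d : i ∈ I, i ≥ d}`: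
(a) if `d−1 ∉ I₁` then `Γ_I` is the internal direct product of the standard parabolic subgroup
of `W` on the nodes `I₁` with `G_{I₂′}`; (b) if `d−1 ∈ I₁` then `Γ_I` is the internal
semidirect product of the standard parabolic subgroup of `W` on the nodes
`(I₁ ∖ {d−1}) ∪ (x₀·G_{I₂′})` with `G_{I₂′}`.  In particular, for `d ≤ j ≤ d+k−1`,
`⟨R̂_0, …, R̂_j⟩` is the internal semidirect product of the parabolic subgroup on the nodes
`{0,…,d−2} ∪ (x₀·G_{{0,…,j−d}})` with `G_{{0,…,j−d}}`. -/
theorem parabolic_form_of_GammaI (d k v : ℕ) (hd : 2 ≤ d) (hk : 1 ≤ k) (hv : 1 ≤ v)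
    (q : ℕ → ℕ) (hq : ∀ m, q m = 0 ∨ 2 ≤ q m)
    {G : Type*} [Group G] (R : Fin k → Subgroup G)
    (hGgen : (⨆ i : Fin k, R i) = ⊤)
    (π : G →* Equiv.Perm (Fin v))
    (htrans : ∀ x y : Fin v, ∃ g : G, π g x = y)
    (x₀ : Fin v)
    (hGint : ∀ I J : Set (Fin k), GIg k R I ⊓ GIg k R J = GIg k R (I ∩ J))
    (hfixx : ∀ g ∈ GIg k R {i : Fin k | (i : ℕ) ≠ 0}, π g x₀ = x₀)
    (horb : ∀ I J : Set (Fin k),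
      orbG k v π R x₀ I ∩ orbG k v π R x₀ J = orbG k v π R x₀ (I ∩ J))
    (hpar : ∀ B₁ B₂ : Set (Fin (d - 1) ⊕ Fin v),
      Subgroup.closure ((coxMat d v q hq).simple '' B₁) ⊓
          Subgroup.closure ((coxMat d v q hq).simple '' B₂)
        = Subgroup.closure ((coxMat d v q hq).simple '' (B₁ ∩ B₂)))
    (α : G →* MulAut (coxMat d v q hq).Group)
    (hα1 : ∀ (g : G) (i : Fin (d - 1)),
      α g ((coxMat d v q hq).simple (Sum.inl i)) = (coxMat d v q hq).simple (Sum.inl i))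
    (hα2 : ∀ (g : G) (H : Fin v),
      α g ((coxMat d v q hq).simple (Sum.inr H)) = (coxMat d v q hq).simple (Sum.inr (π g H)))
    (I : Set (Fin (d + k))) :
    -- (a): if `d−1 ∉ I₁`, then `Γ_I` is the internal direct product of the parabolic subgroup
    -- on the nodes `I₁` with `G_{I₂′}`
    ((¬ ∃ i ∈ I, (i : ℕ) = d - 1) →
      GammaIx d k v q hq hd α R x₀ I
          = Subgroup.map (SemidirectProduct.inl (φ := α))
              (parab d v q hq (Sum.inl '' {j : Fin (d - 1) | ∃ i ∈ I, (i : ℕ) = (j : ℕ)})) ⊔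
            Subgroup.map (SemidirectProduct.inr (φ := α))
              (GIg k R {t : Fin k | ∃ i ∈ I, (i : ℕ) = (t : ℕ) + d}) ∧
        Subgroup.map (SemidirectProduct.inl (φ := α))
              (parab d v q hq (Sum.inl '' {j : Fin (d - 1) | ∃ i ∈ I, (i : ℕ) = (j : ℕ)})) ⊓
            Subgroup.map (SemidirectProduct.inr (φ := α))
              (GIg k R {t : Fin k | ∃ i ∈ I, (i : ℕ) = (t : ℕ) + d}) = ⊥ ∧
        ∀ w ∈ Subgroup.map (SemidirectProduct.inl (φ := α))
              (parab d v q hq (Sum.inl '' {j : Fin (d - 1) | ∃ i ∈ I, (i : ℕ) = (j : ℕ)})),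
          ∀ g ∈ Subgroup.map (SemidirectProduct.inr (φ := α))
              (GIg k R {t : Fin k | ∃ i ∈ I, (i : ℕ) = (t : ℕ) + d}),
            Commute w g) ∧
    -- (b): if `d−1 ∈ I₁`, then `Γ_I` is the internal semidirect product of the parabolic
    -- subgroup on the nodes `(I₁ ∖ {d−1}) ∪ (x₀·G_{I₂′})` with `G_{I₂′}`
    ((∃ i ∈ I, (i : ℕ) = d - 1) →
      GammaIx d k v q hq hd α R x₀ I
          = Subgroup.map (SemidirectProduct.inl (φ := α))
              (parab d v q hq (Sum.inl '' {j : Fin (d - 1) | ∃ i ∈ I, (i : ℕ) = (j : ℕ)} ∪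
                Sum.inr '' orbG k v π R x₀ {t : Fin k | ∃ i ∈ I, (i : ℕ) = (t : ℕ) + d})) ⊔
            Subgroup.map (SemidirectProduct.inr (φ := α))
              (GIg k R {t : Fin k | ∃ i ∈ I, (i : ℕ) = (t : ℕ) + d}) ∧
        Subgroup.map (SemidirectProduct.inl (φ := α))
              (parab d v q hq (Sum.inl '' {j : Fin (d - 1) | ∃ i ∈ I, (i : ℕ) = (j : ℕ)} ∪
                Sum.inr '' orbG k v π R x₀ {t : Fin k | ∃ i ∈ I, (i : ℕ) = (t : ℕ) + d})) ⊓
            Subgroup.map (SemidirectProduct.inr (φ := α))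
              (GIg k R {t : Fin k | ∃ i ∈ I, (i : ℕ) = (t : ℕ) + d}) = ⊥ ∧
        ∀ x ∈ GammaIx d k v q hq hd α R x₀ I,
          ∀ w ∈ Subgroup.map (SemidirectProduct.inl (φ := α))
              (parab d v q hq (Sum.inl '' {j : Fin (d - 1) | ∃ i ∈ I, (i : ℕ) = (j : ℕ)} ∪
                Sum.inr '' orbG k v π R x₀ {t : Fin k | ∃ i ∈ I, (i : ℕ) = (t : ℕ) + d})),
            x * w * x⁻¹ ∈ Subgroup.map (SemidirectProduct.inl (φ := α))
              (parab d v q hq (Sum.inl '' {j : Fin (d - 1) | ∃ i ∈ I, (i : ℕ) = (j : ℕ)} ∪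
                Sum.inr '' orbG k v π R x₀ {t : Fin k | ∃ i ∈ I, (i : ℕ) = (t : ℕ) + d}))) ∧
    -- in particular: for `d ≤ j ≤ d+k−1`, `⟨R̂_0, …, R̂_j⟩` is the internal semidirect product
    -- of the parabolic subgroup on `{0,…,d−2} ∪ (x₀·G_{{0,…,j−d}})` with `G_{{0,…,j−d}}`
    (∀ j : Fin (d + k), d ≤ (j : ℕ) →
      GammaIx d k v q hq hd α R x₀ {i : Fin (d + k) | i ≤ j}
          = Subgroup.map (SemidirectProduct.inl (φ := α))
              (parab d v q hq ((Set.range Sum.inl) ∪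
                Sum.inr '' orbG k v π R x₀ {t : Fin k | (t : ℕ) ≤ (j : ℕ) - d})) ⊔
            Subgroup.map (SemidirectProduct.inr (φ := α))
              (GIg k R {t : Fin k | (t : ℕ) ≤ (j : ℕ) - d})) := by
  classical
  refine ⟨fun hnot => ?_, fun hyes => ?_, fun j hj => ?_⟩
  · refine ⟨aux_partA hd I hnot, aux_map_inl_inf_map_inr α _ _, ?_⟩
    intro w hw g hg
    obtain ⟨w', hw', rfl⟩ := Subgroup.mem_map.mp hw
    obtain ⟨g', hg', rfl⟩ := Subgroup.mem_map.mp hg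
    have hfix : α g' w' = w' := aux_fix hα1 g' hw'
    show SemidirectProduct.inl w' * SemidirectProduct.inr g'
        = SemidirectProduct.inr g' * SemidirectProduct.inl w'
    calc SemidirectProduct.inl w' * SemidirectProduct.inr g'
        = SemidirectProduct.inl (α g' w') * SemidirectProduct.inr g' := by rw [hfix]
      _ = (SemidirectProduct.inr g' * SemidirectProduct.inl w' * SemidirectProduct.inr g'⁻¹) *
            SemidirectProduct.inr g' := by rw [SemidirectProduct.inl_aut]
      _ = SemidirectProduct.inr g' * SemidirectProduct.inl w' := by rw [map_inv]; group
  · have heq := aux_partB (π := π) (R := R) (x₀ := x₀) hd hα2 I hyes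
    refine ⟨heq, aux_map_inl_inf_map_inr α _ _, ?_⟩
    intro x hx w hw
    have hnorm : GammaIx d k v q hq hd α R x₀ I ≤
        Subgroup.normalizer ((Subgroup.map (SemidirectProduct.inl (φ := α))
          (parab d v q hq (Sum.inl '' {j : Fin (d - 1) | ∃ i ∈ I, (i : ℕ) = (j : ℕ)} ∪
            Sum.inr '' orbG k v π R x₀
              {t : Fin k | ∃ i ∈ I, (i : ℕ) = (t : ℕ) + d}))) : Set _) := by
      rw [heq]
      refine sup_le Subgroup.le_normalizer ?_
      intro y hy
      obtain ⟨g, hg, rfl⟩ := Subgroup.mem_map.mp hy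
      rw [Subgroup.mem_normalizer_iff]
      intro n
      constructor
      · intro hn
        obtain ⟨w', hw', rfl⟩ := Subgroup.mem_map.mp hn
        refine Subgroup.mem_map.mpr ⟨α g w', aux_stab hα1 hα2 hg hw', ?_⟩
        rw [SemidirectProduct.inl_aut, map_inv]
      · intro hn
        obtain ⟨w', hw', hwx⟩ := Subgroup.mem_map.mp hn
        have hn' : n = SemidirectProduct.inl ((α g)⁻¹ w') := by
          rw [SemidirectProduct.inl_aut_inv, hwx, map_inv]
          group
        rw [hn']
        refine Subgroup.mem_map.mpr ⟨(α g)⁻¹ w', ?_, rfl⟩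
        have hinv : (α g)⁻¹ = α g⁻¹ := (map_inv α g).symm
        rw [hinv]
        exact aux_stab hα1 hα2 (inv_mem hg) hw'
    exact (Subgroup.mem_normalizer_iff.mp (hnorm hx) w).mp hw
  · have hyes' : ∃ i ∈ {i : Fin (d + k) | i ≤ j}, (i : ℕ) = d - 1 := by
      refine ⟨⟨d - 1, by omega⟩, ?_, rfl⟩
      simp only [Set.mem_setOf_eq, Fin.le_def]
      omega
    have h := aux_partB (π := π) (R := R) (x₀ := x₀) hd hα2 {i : Fin (d + k) | i ≤ j} hyes'
    have e1 : {j' : Fin (d - 1) | ∃ i ∈ {i : Fin (d + k) | i ≤ j}, (i : ℕ) = (j' : ℕ)}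
        = Set.univ := by
      ext j'
      simp only [Set.mem_setOf_eq, Set.mem_univ, iff_true]
      refine ⟨⟨(j' : ℕ), by have := j'.isLt; omega⟩, ?_, rfl⟩
      simp only [Set.mem_setOf_eq, Fin.le_def]
      have := j'.isLt
      omega
    have e2 : {t : Fin k | ∃ i ∈ {i : Fin (d + k) | i ≤ j}, (i : ℕ) = (t : ℕ) + d}
        = {t : Fin k | (t : ℕ) ≤ (j : ℕ) - d} := by
      ext t
      simp only [Set.mem_setOf_eq]
      constructor
      · rintro ⟨i, hile, hival⟩
        have := Fin.le_def.mp hile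
        omega
      · intro ht
        refine ⟨⟨(t : ℕ) + d, by have := t.isLt; omega⟩, ?_, rfl⟩
        simp only [Set.mem_setOf_eq, Fin.le_def, Fin.val_mk]
        omega
    rw [e1, e2, Set.image_univ] at h
    exact h

end
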